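/- arXiv:1507.06965 — 2 statements merged into one kernel-verified Lean document; each statement's English description precedes it below -/
import Mathlib

section
/- Under the hypotheses that r^n ≠ 0, γ^n > 1, γ^n ε_T < 1, g^{n+1} − g^n = r^n − r^{n+1}, and | ‖r^{n+1}‖/‖r^n‖ − (1 − 1/γ^n) | < ε_T, the updated parameter γ̃^{n+1} := q · ⟨r^n, r^n⟩ / ⟨r^n, g^{n+1} − g^n⟩ (with 0 < q < 1) satisfies q·γ^n/(γ^n(2 + ε_T) − 1) < γ̃^{n+1} < q·γ^n/(1 − ε_T γ^n). -/
open scoped RealInnerProductSpace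

/-- Corollary 4.2: two-sided bound on the updated dissipation parameter γ̃ⁿ⁺¹. -/
theorem gamma_update_bounds {d : ℕ}
    (rn rn1 gn gn1 : EuclideanSpace ℝ (Fin d))
    (hrn : rn ≠ 0) (γ εT q : ℝ) (hγ : 1 < γ) (hεT : 0 < εT) (hγε : γ * εT < 1)
    (hq0 : 0 < q) (hq1 : q < 1)
    (hg : gn1 - gn = rn - rn1)
    (hrate : |‖rn1‖ / ‖rn‖ - (1 - 1/γ)| < εT) :
    q * γ / (γ * (2 + εT) - 1) < q * ⟪rn, rn⟫ / ⟪rn, gn1 - gn⟫ ∧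
      q * ⟪rn, rn⟫ / ⟪rn, gn1 - gn⟫ < q * γ / (1 - εT * γ) := by
  have ha : (0:ℝ) < ‖rn‖ := norm_pos_iff.mpr hrn
  have hb : (0:ℝ) ≤ ‖rn1‖ := norm_nonneg _
  have hγ0 : (0:ℝ) < γ := lt_trans one_pos hγ
  have hγinv : γ * (1/γ) = 1 := mul_one_div_cancel (ne_of_gt hγ0)
  obtain ⟨hr2, hr1⟩ := abs_lt.mp hrate
  have hbhi : ‖rn1‖ < ‖rn‖ * (1 - 1/γ + εT) := by
    have := (div_lt_iff₀ ha).mp (by linarith : ‖rn1‖ / ‖rn‖ < 1 - 1/γ + εT)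
    linarith [this]
  have hcs : |⟪rn, rn1⟫| ≤ ‖rn‖ * ‖rn1‖ := abs_real_inner_le_norm rn rn1
  have hcs1 : ⟪rn, rn1⟫ ≤ ‖rn‖ * ‖rn1‖ := le_trans (le_abs_self _) hcs
  have hcs2 : -(‖rn‖ * ‖rn1‖) ≤ ⟪rn, rn1⟫ := neg_le_of_abs_le hcs
  have hD : ⟪rn, gn1 - gn⟫ = ‖rn‖^2 - ⟪rn, rn1⟫ := by
    rw [hg, inner_sub_right, real_inner_self_eq_norm_sq]
  have hself : ⟪rn, rn⟫ = ‖rn‖^2 := real_inner_self_eq_norm_sq rn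
  set a := ‖rn‖
  set c := ⟪rn, rn1⟫
  have hDlo : a^2 * (1/γ - εT) < a^2 - c := by nlinarith
  have hDhi : a^2 - c < a^2 * (2 - 1/γ + εT) := by nlinarith
  have hεγ : 0 < 1/γ - εT := by
    have : εT < 1/γ := by rw [lt_div_iff₀ hγ0]; linarith [hγε]
    linarith
  have hDpos : 0 < a^2 - c := lt_trans (by positivity) hDlo
  have hden1 : 0 < γ * (2 + εT) - 1 := by nlinarith
  have hden2 : 0 < 1 - εT * γ := by nlinarith
  rw [hD, hself]
  have e1 : q * γ * (a^2 * (2 - 1/γ + εT)) = q * a^2 * (γ * (2 + εT) - 1) := by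
    field_simp; ring
  have e2 : q * γ * (a^2 * (1/γ - εT)) = q * a^2 * (1 - εT * γ) := by
    field_simp
  have hqγ : 0 < q * γ := mul_pos hq0 hγ0
  constructor
  · rw [div_lt_div_iff₀ hden1 hDpos]
    have h := mul_lt_mul_of_pos_left hDhi hqγ
    linarith [e1]
  · rw [div_lt_div_iff₀ hDpos hden2]
    have h := mul_lt_mul_of_pos_left hDlo hqγ
    linarith [e2]
end

section
/- Let 0 < ε_T, 0 < q < 1, and γ > 1 with γ ≤ γ_MONO = (1/ε_T)(1 − q/q̄) for some q < q̄ ≤ 1. Then ε_T γ < 1 and q/(1 − ε_T γ) ≤ q̄, so the interval (qγ/(γ(2+ε_T) − 1), qγ/(1 − ε_T γ)) containing the updated parameter γ̃ is contained in (0, q̄ γ). -/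
/-- The γ_MONO bound combines with the two-sided γ-update bound: the update
interval is contained in (0, q̄ γ). -/
theorem gamma_mono_interval (εT q qbar γ : ℝ)
    (hεT : 0 < εT) (hq0 : 0 < q) (hq1 : q < 1) (hγ : 1 < γ)
    (hqq : q < qbar) (hqbar : qbar ≤ 1)
    (hγmono : γ ≤ (1/εT) * (1 - q/qbar)) :
    εT * γ < 1 ∧ q / (1 - εT * γ) ≤ qbar ∧
      ∀ x : ℝ, q * γ / (γ * (2 + εT) - 1) < x → x < q * γ / (1 - εT * γ) →
        0 < x ∧ x < qbar * γ := by
  have hqbar0 : 0 < qbar := lt_trans hq0 hqq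
  have hkey : εT * γ ≤ 1 - q / qbar := by
    have := mul_le_mul_of_nonneg_left hγmono hεT.le
    calc εT * γ ≤ εT * ((1/εT) * (1 - q/qbar)) := this
      _ = 1 - q/qbar := by field_simp
  have hpos : 0 < q / qbar := div_pos hq0 hqbar0
  have h1 : εT * γ < 1 := lt_of_le_of_lt hkey (by linarith)
  have hden : 0 < 1 - εT * γ := by linarith
  have h2 : q / (1 - εT * γ) ≤ qbar := by
    rw [div_le_iff₀ hden]
    have : q / qbar ≤ 1 - εT * γ := by linarith
    calc q = qbar * (q / qbar) := by field_simp
      _ ≤ qbar * (1 - εT * γ) := by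
          exact mul_le_mul_of_nonneg_left this hqbar0.le
  refine ⟨h1, h2, fun x hlo hhi => ?_⟩
  have hγ0 : 0 < γ := lt_trans one_pos hγ
  have hden2 : 0 < γ * (2 + εT) - 1 := by nlinarith
  constructor
  · exact lt_trans (div_pos (mul_pos hq0 hγ0) hden2) hlo
  · calc x < q * γ / (1 - εT * γ) := hhi
      _ = (q / (1 - εT * γ)) * γ := by ring
      _ ≤ qbar * γ := mul_le_mul_of_nonneg_right h2 hγ0.le
end
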